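/- Let K_1 ⊆ ℂ^{p_1} and K_2 ⊆ ℂ^{p_2} be determining compact sets. If A = (a_j) ⊆ K_1 is a pseudo Leja sequence for K_1 with Edrei growth (M'_j)_{j≥1} and B = (b_j) ⊆ K_2 is a pseudo Leja sequence for K_2 with Edrei growth (M''_j)_{j≥1}, then the intertwining sequence Ω = A ⊕ B is a pseudo Leja sequence for K = K_1 × K_2 ⊆ ℂ^{p_1+p_2} with Edrei growth M_j = M'_{φ_1(j)}·M''_{φ_2(j)} (with the convention M'_0 = M''_0 = 1). -/

import Mathlib

open scoped BigOperators
open Filter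

namespace PseudoLeja

/-- Graded lexicographic strict order on multi-indices in `ℕ^p`:
`α ≺ β` iff `|α| < |β|`, or `|α| = |β|` and the leftmost nonzero entry of `α - β`
is negative (i.e. at the first index where they differ, `α` is smaller). -/
def GLexLT {p : ℕ} (α β : Fin p → ℕ) : Prop :=
  (∑ i, α i) < (∑ i, β i) ∨
    ((∑ i, α i) = (∑ i, β i) ∧ ∃ k, (∀ i, i < k → α i = β i) ∧ α k < β k)

/-- `κ : ℕ → ℕ^p` is the (unique) enumeration of all multi-indices that is strictly
increasing from the usual order on `ℕ` to the graded lexicographic order. -/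
def IsGLexEnum {p : ℕ} (κ : ℕ → Fin p → ℕ) : Prop :=
  Function.Bijective κ ∧ ∀ m n : ℕ, m < n → GLexLT (κ m) (κ n)

/-- The `N`-th monomial `e_N(z) = z^{κ(N)}`. -/
noncomputable def mono {p : ℕ} (κ : ℕ → Fin p → ℕ) (N : ℕ) (z : Fin p → ℂ) : ℂ :=
  ∏ i, z i ^ κ N i

/-- Vandermonde determinant of the points `ξ 0, …, ξ (n-1)`:
`vdm κ n ξ = det [e_N(ξ_M)]_{0 ≤ M, N ≤ n-1}`. -/
noncomputable def vdm {p : ℕ} (κ : ℕ → Fin p → ℕ) (n : ℕ) (ξ : ℕ → Fin p → ℂ) : ℂ :=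
  Matrix.det (Matrix.of fun M N : Fin n => mono κ (N : ℕ) (ξ (M : ℕ)))

/-- A set `K ⊆ ℂ^p` is determining if no nonzero polynomial in `p` complex
variables vanishes identically on `K`. -/
def Determining {p : ℕ} (K : Set (Fin p → ℂ)) : Prop :=
  ∀ P : MvPolynomial (Fin p) ℂ, (∀ z ∈ K, MvPolynomial.eval z P = 0) → P = 0

/-- `h_d = C(p+d, d)`, the dimension of the space of polynomials of total degree
at most `d` in `p` variables. -/
def hdim (p d : ℕ) : ℕ := Nat.choose (p + d) d

/-- `l_d = p·C(p+d, p+1)`, the degree of the Vandermonde determinant of `h_d` points. -/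
def ldim (p d : ℕ) : ℕ := p * Nat.choose (p + d) (p + 1)

/-- `V_j(K)`, the maximal modulus of the Vandermonde determinant of `j` points of `K`. -/
noncomputable def Vsup {p : ℕ} (κ : ℕ → Fin p → ℕ) (K : Set (Fin p → ℂ)) (j : ℕ) : ℝ :=
  sSup { v : ℝ | ∃ ξ : ℕ → Fin p → ℂ, (∀ i, ξ i ∈ K) ∧ v = ‖vdm κ j ξ‖ }

/-- `(ξ_j)_{j≥0} ⊆ K` is a pseudo Leja sequence for `K` with Edrei growth `(M_j)_{j≥1}`:
`M_j ≥ 1`, `M_j·|vdm(ξ_0,…,ξ_j)| ≥ max_{z∈K} |vdm(ξ_0,…,ξ_{j-1},z)|` for `j ≥ 1`, and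
`lim_{d→∞} (max_{h_{d-1} ≤ j < h_d} M_j)^{1/d} = 1`. -/
def IsPseudoLeja {p : ℕ} (κ : ℕ → Fin p → ℕ) (K : Set (Fin p → ℂ))
    (ξ : ℕ → Fin p → ℂ) (M : ℕ → ℝ) : Prop :=
  (∀ j, ξ j ∈ K) ∧
  (∀ j, 1 ≤ j → 1 ≤ M j) ∧
  (∀ j, 1 ≤ j → ∀ z ∈ K,
    ‖vdm κ (j + 1) (Function.update ξ j z)‖ ≤
      M j * ‖vdm κ (j + 1) ξ‖) ∧
  Filter.Tendsto
    (fun d : ℕ => (sSup (M '' Set.Ico (hdim p (d - 1)) (hdim p d))) ^ ((d : ℝ)⁻¹))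
    Filter.atTop (nhds 1)

section Aux

theorem GLexLT.asymm {p : ℕ} {α β : Fin p → ℕ} (h : GLexLT α β) (h' : GLexLT β α) : False := by
  rcases h with h | ⟨hs, k, hk, hlt⟩
  · rcases h' with h' | ⟨hs', _⟩ <;> omega
  · rcases h' with h' | ⟨hs', k', hk', hlt'⟩
    · omega
    · rcases lt_trichotomy k k' with hkk | hkk | hkk
      · have := hk' k hkk; omega
      · subst hkk; omega
      · have := hk k' hkk; omega

theorem GLexLT.irrefl {p : ℕ} {α : Fin p → ℕ} (h : GLexLT α α) : False := h.asymm h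

/-- index reflection: if κ m ⪯ κ n then m ≤ n -/
theorem le_of_glexle {p : ℕ} {κ : ℕ → Fin p → ℕ} (hκ : IsGLexEnum κ) {m n : ℕ}
    (h : κ m = κ n ∨ GLexLT (κ m) (κ n)) : m ≤ n := by
  by_contra hc
  push_neg at hc
  have h2 := hκ.2 n m hc
  rcases h with h | h
  · rw [h] at h2; exact h2.irrefl
  · exact h.asymm h2

theorem sum_mono_of_le {p : ℕ} {κ : ℕ → Fin p → ℕ} (hκ : IsGLexEnum κ) {m n : ℕ}
    (h : m ≤ n) : (∑ i, κ m i) ≤ (∑ i, κ n i) := by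
  rcases h.lt_or_eq with h | h
  · rcases hκ.2 m n h with h | ⟨hs, _⟩ <;> omega
  · rw [h]

theorem enum_zero {p : ℕ} {κ : ℕ → Fin p → ℕ} (hκ : IsGLexEnum κ) : κ 0 = fun _ => 0 := by
  obtain ⟨j, hj⟩ := hκ.1.2 (fun _ => 0)
  rcases Nat.eq_zero_or_pos j with rfl | hj0
  · exact hj
  · exfalso
    have h2 := hκ.2 0 j hj0
    rw [hj] at h2
    rcases h2 with h | ⟨hs, k, hk, hlt⟩
    · simp at h
    · simp at hlt


theorem append_apply_lt {p₁ p₂ : ℕ} (α : Fin p₁ → ℕ) (β : Fin p₂ → ℕ)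
    (i : Fin (p₁ + p₂)) (h : (i : ℕ) < p₁) :
    Fin.append α β i = α ⟨i, h⟩ := by
  conv_lhs => rw [show i = Fin.castAdd p₂ ⟨i, h⟩ from Fin.ext rfl]
  rw [Fin.append_left]

theorem append_apply_ge {p₁ p₂ : ℕ} (α : Fin p₁ → ℕ) (β : Fin p₂ → ℕ)
    (i : Fin (p₁ + p₂)) (h : p₁ ≤ (i : ℕ)) :
    Fin.append α β i = β ⟨(i : ℕ) - p₁, by omega⟩ := by
  conv_lhs => rw [show i = Fin.natAdd p₁ ⟨(i : ℕ) - p₁, by omega⟩ from Fin.ext (by simp; omega)]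
  rw [Fin.append_right]

theorem append_inj {p₁ p₂ : ℕ} {α α' : Fin p₁ → ℕ} {β β' : Fin p₂ → ℕ}
    (h : Fin.append α β = Fin.append α' β') : α = α' ∧ β = β' := by
  constructor
  · funext i
    have := congrFun h (Fin.castAdd p₂ i)
    simpa [Fin.append_left] using this
  · funext i
    have := congrFun h (Fin.natAdd p₁ i)
    simpa [Fin.append_right] using this

theorem sum_append {p₁ p₂ : ℕ} (α : Fin p₁ → ℕ) (β : Fin p₂ → ℕ) :
    (∑ i, Fin.append α β i) = (∑ i, α i) + (∑ i, β i) := by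
  rw [Fin.sum_univ_add]
  simp [Fin.append_left, Fin.append_right]

theorem glex_append_mono {p₁ p₂ : ℕ} {α α' : Fin p₁ → ℕ} {β β' : Fin p₂ → ℕ}
    (h1 : α = α' ∨ GLexLT α α') (h2 : β = β' ∨ GLexLT β β') :
    Fin.append α β = Fin.append α' β' ∨ GLexLT (Fin.append α β) (Fin.append α' β') := by
  rcases h1 with rfl | h1
  · rcases h2 with rfl | h2
    · exact Or.inl rfl
    · refine Or.inr ?_
      rcases h2 with h2 | ⟨hs, k, hk, hlt⟩
      · exact Or.inl (by rw [sum_append, sum_append]; omega)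
      · refine Or.inr ⟨by rw [sum_append, sum_append]; omega, Fin.natAdd p₁ k, ?_, ?_⟩
        · intro i hi
          by_cases hip : (i : ℕ) < p₁
          · rw [append_apply_lt _ _ _ hip, append_apply_lt _ _ _ hip]
          · push_neg at hip
            rw [append_apply_ge _ _ _ hip, append_apply_ge _ _ _ hip]
            refine hk _ ?_
            have : (i : ℕ) < p₁ + (k : ℕ) := hi
            simp only [Fin.lt_def]
            omega
        · rw [Fin.append_right, Fin.append_right]
          exact hlt
  · refine Or.inr ?_
    have hsb : (∑ i, β i) ≤ (∑ i, β' i) := by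
      rcases h2 with rfl | h2
      · exact le_refl _
      · rcases h2 with h2 | ⟨hs, _⟩ <;> omega
    rcases h1 with h1 | ⟨hs, k, hk, hlt⟩
    · exact Or.inl (by rw [sum_append, sum_append]; omega)
    · -- equal sums on the α side; total sums equal or strict
      rcases lt_or_eq_of_le hsb with hsb | hsb
      · exact Or.inl (by rw [sum_append, sum_append]; omega)
      · refine Or.inr ⟨by rw [sum_append, sum_append]; omega, Fin.castAdd p₂ k, ?_, ?_⟩
        · intro i hi
          have hip : (i : ℕ) < p₁ := lt_of_lt_of_le hi (by simpa using k.2.le)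
          rw [append_apply_lt _ _ _ hip, append_apply_lt _ _ _ hip]
          exact hk _ hi
        · rw [Fin.append_left, Fin.append_left]
          exact hlt


theorem mono_enum_zero {p : ℕ} {κ : ℕ → Fin p → ℕ} (hκ : IsGLexEnum κ) (z : Fin p → ℂ) :
    mono κ 0 z = 1 := by
  simp [mono, enum_zero hκ]

theorem mono_append {p₁ p₂ : ℕ} (α : Fin p₁ → ℕ) (β : Fin p₂ → ℕ)
    (x : Fin p₁ → ℂ) (y : Fin p₂ → ℂ) :
    (∏ i, Fin.append x y i ^ Fin.append α β i) = (∏ i, x i ^ α i) * (∏ i, y i ^ β i) := by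
  rw [Fin.prod_univ_add]
  simp [Fin.append_left, Fin.append_right]

theorem vdm_zero {p : ℕ} (κ : ℕ → Fin p → ℕ) (ξ : ℕ → Fin p → ℂ) : vdm κ 0 ξ = 1 :=
  Matrix.det_fin_zero

theorem vdm_one {p : ℕ} {κ : ℕ → Fin p → ℕ} (hκ : IsGLexEnum κ) (ξ : ℕ → Fin p → ℂ) :
    vdm κ 1 ξ = 1 := by
  rw [vdm, Matrix.det_fin_one]
  simp [mono_enum_zero hκ]

theorem vdm_ne_zero {p : ℕ} {κ : ℕ → Fin p → ℕ} (hκ : IsGLexEnum κ) {K : Set (Fin p → ℂ)}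
    (hKd : Determining K) {ξ : ℕ → Fin p → ℂ} {M : ℕ → ℝ} (hmem : ∀ j, ξ j ∈ K)
    (hineq : ∀ j, 1 ≤ j → ∀ z ∈ K,
      ‖vdm κ (j + 1) (Function.update ξ j z)‖ ≤
        M j * ‖vdm κ (j + 1) ξ‖) :
    ∀ n, vdm κ n ξ ≠ 0 := by
  intro n
  induction n with
  | zero => rw [vdm_zero]; exact one_ne_zero
  | succ n ih =>
    rcases Nat.eq_zero_or_pos n with rfl | hn
    · rw [vdm_one hκ]; exact one_ne_zero
    -- the coefficients of the last-row expansion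
    set c : Fin (n + 1) → ℂ := fun N =>
      (-1 : ℂ) ^ ((n : ℕ) + (N : ℕ)) *
        Matrix.det (Matrix.of fun M N' : Fin n =>
          mono κ ((N.succAbove N' : Fin (n + 1)) : ℕ) (ξ (M : ℕ))) with hc
    set Q : MvPolynomial (Fin p) ℂ :=
      ∑ N : Fin (n + 1),
        MvPolynomial.monomial (Finsupp.equivFunOnFinite.symm (κ (N : ℕ))) (c N) with hQ
    have heval : ∀ z, MvPolynomial.eval z Q = vdm κ (n + 1) (Function.update ξ n z) := by
      intro z
      rw [vdm, Matrix.det_succ_row _ (Fin.last n), hQ, map_sum]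
      refine Finset.sum_congr rfl fun N _ => ?_
      rw [MvPolynomial.eval_monomial, Finsupp.prod_fintype _ _ (fun i => pow_zero (z i))]
      have h1 : (Matrix.of fun M N : Fin (n+1) => mono κ (N : ℕ)
          (Function.update ξ n z (M : ℕ))) (Fin.last n) N = mono κ (N : ℕ) z := by
        simp [Function.update_self]
      have h2 : ((Matrix.of fun M N : Fin (n+1) => mono κ (N : ℕ)
            (Function.update ξ n z (M : ℕ))).submatrix (Fin.last n).succAbove N.succAbove)
          = Matrix.of fun M N' : Fin n =>
            mono κ ((N.succAbove N' : Fin (n + 1)) : ℕ) (ξ (M : ℕ)) := by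
        ext M N'
        simp only [Matrix.submatrix_apply, Matrix.of_apply, Fin.succAbove_last]
        rw [Function.update_of_ne]
        · simp
        · simp only [Fin.coe_castSucc]
          omega
      rw [h1, h2, hc]
      simp only [Fin.val_last]
      have : ∀ i, z i ^ (Finsupp.equivFunOnFinite.symm (κ (N : ℕ))) i = z i ^ κ (N : ℕ) i := by
        intro i; simp
      rw [Finset.prod_congr rfl (fun i _ => this i)]
      show (-1:ℂ) ^ (n + (N:ℕ)) * _ * mono κ (N:ℕ) z = (-1:ℂ) ^ (n + (N:ℕ)) * mono κ (N:ℕ) z * _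
      ring
    have hQcoeff : MvPolynomial.coeff (Finsupp.equivFunOnFinite.symm (κ n)) Q = vdm κ n ξ := by
      rw [hQ, MvPolynomial.coeff_sum]
      rw [Finset.sum_eq_single (Fin.last n)]
      · rw [MvPolynomial.coeff_monomial, if_pos (by simp [Fin.val_last])]
        have hpow : ((-1 : ℂ)) ^ (n + n) = 1 := Even.neg_one_pow ⟨n, by omega⟩
        rw [hc]
        simp only [Fin.val_last]
        rw [hpow, one_mul, vdm]
        congr 1
        ext M N'
        simp [Fin.succAbove_last]
      · intro N _ hNe
        rw [MvPolynomial.coeff_monomial, if_neg]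
        intro hEq
        apply hNe
        have : κ (N : ℕ) = κ n := by
          have := congrArg (Finsupp.equivFunOnFinite) hEq
          simpa using this
        have := hκ.1.1 this
        exact Fin.ext (by simp [this, Fin.val_last])
      · intro h
        exact absurd (Finset.mem_univ _) h
    have hQ0 : Q ≠ 0 := by
      intro h
      rw [h, MvPolynomial.coeff_zero] at hQcoeff
      exact ih hQcoeff.symm
    have : ¬ (∀ z ∈ K, MvPolynomial.eval z Q = 0) := fun h => hQ0 (hKd Q h)
    push_neg at this
    obtain ⟨z, hzK, hz⟩ := this
    rw [heval] at hz
    have h1 := hineq n hn z hzK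
    intro h0
    rw [h0] at h1
    simp only [norm_zero, mul_zero] at h1
    have : ‖vdm κ (n + 1) (Function.update ξ n z)‖ > 0 := by
      simpa [norm_pos_iff] using hz
    linarith

/-- `F_u(z) = e_u(z) + ∑_{u'<u} c_{u,u'} e_{u'}(z)`, a "Newton-like" polynomial. -/
noncomputable def Fpoly {p : ℕ} (κ : ℕ → Fin p → ℕ) (cc : ℕ → ℕ → ℂ) (u : ℕ)
    (z : Fin p → ℂ) : ℂ :=
  ∑ u' ∈ Finset.range (u + 1), cc u u' * mono κ u' z

theorem exists_cc {p : ℕ} (κ : ℕ → Fin p → ℕ) (a : ℕ → Fin p → ℂ)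
    (hnz : ∀ u, vdm κ u a ≠ 0) :
    ∃ cc : ℕ → ℕ → ℂ, (∀ u, cc u u = 1) ∧ (∀ u u', u < u' → cc u u' = 0) ∧
      (∀ u i, i < u → Fpoly κ cc u (a i) = 0) := by
  classical
  set V : ∀ u : ℕ, Matrix (Fin u) (Fin u) ℂ :=
    fun u => Matrix.of fun i u' : Fin u => mono κ (u' : ℕ) (a (i : ℕ)) with hV
  set cvec : ∀ u : ℕ, Fin u → ℂ :=
    fun u => (V u)⁻¹.mulVec (fun i : Fin u => - mono κ u (a (i : ℕ))) with hcvec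
  refine ⟨fun u u' => if h : u' < u then cvec u ⟨u', h⟩ else if u' = u then 1 else 0,
    fun u => by simp, fun u u' h => by
      dsimp only
      rw [dif_neg (by omega), if_neg (by omega)], ?_⟩
  intro u i hi
  have hmv : (V u).mulVec (cvec u) = fun i : Fin u => - mono κ u (a (i : ℕ)) := by
    rw [hcvec, Matrix.mulVec_mulVec, Matrix.mul_nonsing_inv _ (by
      rw [isUnit_iff_ne_zero]; exact hnz u), Matrix.one_mulVec]
  have hmvi := congrFun hmv ⟨i, hi⟩
  rw [Fpoly, Finset.sum_range_succ, dif_neg (by omega), if_pos rfl, one_mul]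
  have hsum : (∑ u' ∈ Finset.range u,
      (if h : u' < u then cvec u ⟨u', h⟩ else if u' = u then 1 else 0) * mono κ u' (a i))
      = ((V u).mulVec (cvec u)) ⟨i, hi⟩ := by
    rw [Matrix.mulVec, dotProduct]
    rw [← Fin.sum_univ_eq_sum_range (fun u' =>
      (if h : u' < u then cvec u ⟨u', h⟩ else if u' = u then 1 else 0) * mono κ u' (a i)) u]
    refine Finset.sum_congr rfl fun u' _ => ?_
    rw [dif_pos u'.2]
    simp only [hV, Matrix.of_apply]
    ring
  rw [hsum, hmvi]
  ring

theorem det_transform {p n : ℕ} (κ : ℕ → Fin p → ℕ) (cc : ℕ → ℕ → ℂ)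
    (hdiag : ∀ u, cc u u = 1) (hzero : ∀ u u', u < u' → cc u u' = 0)
    (η : Fin n → Fin p → ℂ) :
    Matrix.det (Matrix.of fun M N : Fin n => mono κ (N : ℕ) (η M)) =
      Matrix.det (Matrix.of fun M N : Fin n => Fpoly κ cc (N : ℕ) (η M)) := by
  classical
  set T : Matrix (Fin n) (Fin n) ℂ := Matrix.of fun N' N : Fin n => cc (N : ℕ) (N' : ℕ) with hT
  have hTtri : T.BlockTriangular id := fun i j hij => hzero _ _ hij
  have hTdet : T.det = 1 := by
    rw [Matrix.det_of_upperTriangular hTtri]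
    simp [hT, hdiag]
  have hprod : (Matrix.of fun M N : Fin n => mono κ (N : ℕ) (η M)) * T =
      Matrix.of fun M N : Fin n => Fpoly κ cc (N : ℕ) (η M) := by
    ext M N
    rw [Matrix.mul_apply]
    simp only [hT, Matrix.of_apply]
    rw [Fpoly]
    have hsub : Finset.range ((N : ℕ) + 1) ⊆ Finset.range n :=
      Finset.range_subset_range.2 N.2
    rw [Finset.sum_subset hsub (fun u' h1 h2 => by
      have : (N : ℕ) < u' := by
        simp only [Finset.mem_range] at h1 h2
        omega
      rw [hzero _ _ this, zero_mul]),
      ← Fin.sum_univ_eq_sum_range (fun u' => cc (N : ℕ) u' * mono κ u' (η M)) n]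
    exact Finset.sum_congr rfl fun N' _ => mul_comm _ _
  calc Matrix.det (Matrix.of fun M N : Fin n => mono κ (N : ℕ) (η M))
      = Matrix.det ((Matrix.of fun M N : Fin n => mono κ (N : ℕ) (η M)) * T) := by
        rw [Matrix.det_mul, hTdet, mul_one]
    _ = _ := by rw [hprod]

theorem det_fpoly_tri {p n : ℕ} (κ : ℕ → Fin p → ℕ) (cc : ℕ → ℕ → ℂ)
    (η : Fin n → Fin p → ℂ)
    (htri : ∀ M N : Fin n, (M : ℕ) < (N : ℕ) → Fpoly κ cc (N : ℕ) (η M) = 0) :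
    Matrix.det (Matrix.of fun M N : Fin n => Fpoly κ cc (N : ℕ) (η M)) =
      ∏ M : Fin n, Fpoly κ cc (M : ℕ) (η M) := by
  exact Matrix.det_of_lowerTriangular _ (fun i j hij => htri i j hij)

theorem vdm_eq_prod_fpoly {p : ℕ} (κ : ℕ → Fin p → ℕ) (cc : ℕ → ℕ → ℂ)
    (a : ℕ → Fin p → ℂ)
    (hdiag : ∀ u, cc u u = 1) (hzero : ∀ u u', u < u' → cc u u' = 0)
    (hvan : ∀ u i, i < u → Fpoly κ cc u (a i) = 0) (n : ℕ) :
    vdm κ n a = ∏ M : Fin n, Fpoly κ cc (M : ℕ) (a (M : ℕ)) := by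
  rw [vdm, det_transform κ cc hdiag hzero, det_fpoly_tri]
  intro M N h
  exact hvan _ _ h

theorem vdm_update_eq {p : ℕ} (κ : ℕ → Fin p → ℕ) (cc : ℕ → ℕ → ℂ)
    (a : ℕ → Fin p → ℂ)
    (hdiag : ∀ u, cc u u = 1) (hzero : ∀ u u', u < u' → cc u u' = 0)
    (hvan : ∀ u i, i < u → Fpoly κ cc u (a i) = 0) (k : ℕ) (z : Fin p → ℂ) :
    vdm κ (k + 1) (Function.update a k z) =
      Fpoly κ cc k z * ∏ M : Fin k, Fpoly κ cc (M : ℕ) (a (M : ℕ)) := by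
  rw [vdm, det_transform κ cc hdiag hzero, det_fpoly_tri]
  · rw [Fin.prod_univ_castSucc]
    have h1 : ∀ M : Fin k, Function.update a k z ((M.castSucc : Fin (k+1)) : ℕ) = a (M : ℕ) := by
      intro M
      rw [Function.update_of_ne]
      simp only [Fin.coe_castSucc]
      exact Nat.ne_of_lt M.2
    have h2 : Function.update a k z ((Fin.last k : Fin (k+1)) : ℕ) = z := by
      simp [Fin.val_last]
    rw [h2]
    simp only [Fin.coe_castSucc, Fin.val_last]
    rw [mul_comm]
    congr 1
    refine Finset.prod_congr rfl fun M _ => ?_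
    have := h1 M
    simp only [Fin.coe_castSucc] at this
    rw [this]
  · intro M N h
    have hMk : (M : ℕ) < k := lt_of_lt_of_le h (Nat.lt_succ_iff.mp N.2)
    rw [Function.update_of_ne (Nat.ne_of_lt hMk)]
    exact hvan _ _ h

theorem fpoly_zero {p : ℕ} {κ : ℕ → Fin p → ℕ} (hκ : IsGLexEnum κ) (cc : ℕ → ℕ → ℂ)
    (hdiag : ∀ u, cc u u = 1) (z : Fin p → ℂ) : Fpoly κ cc 0 z = 1 := by
  rw [Fpoly]
  simp [mono_enum_zero hκ, hdiag]

theorem fpoly_bound {p : ℕ} {κ : ℕ → Fin p → ℕ} {K : Set (Fin p → ℂ)}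
    {a : ℕ → Fin p → ℂ} {M' : ℕ → ℝ} (cc : ℕ → ℕ → ℂ)
    (hdiag : ∀ u, cc u u = 1) (hzero : ∀ u u', u < u' → cc u u' = 0)
    (hvan : ∀ u i, i < u → Fpoly κ cc u (a i) = 0)
    (hnz : ∀ u, vdm κ u a ≠ 0)
    (hineq : ∀ j, 1 ≤ j → ∀ z ∈ K,
      ‖vdm κ (j + 1) (Function.update a j z)‖ ≤
        M' j * ‖vdm κ (j + 1) a‖)
    (k : ℕ) (hk : 1 ≤ k) {z : Fin p → ℂ} (hz : z ∈ K) :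
    ‖Fpoly κ cc k z‖ ≤ M' k * ‖Fpoly κ cc k (a k)‖ := by
  have h1 := hineq k hk z hz
  rw [vdm_update_eq κ cc a hdiag hzero hvan k z] at h1
  have h2 : vdm κ (k + 1) a = Fpoly κ cc k (a k) *
      ∏ M : Fin k, Fpoly κ cc (M : ℕ) (a (M : ℕ)) := by
    have := vdm_update_eq κ cc a hdiag hzero hvan k (a k)
    rwa [Function.update_eq_self] at this
  rw [h2] at h1
  have hP : ‖∏ M : Fin k, Fpoly κ cc (M : ℕ) (a (M : ℕ))‖ > 0 := by
    refine norm_pos_iff.2 ?_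
    rw [← vdm_eq_prod_fpoly κ cc a hdiag hzero hvan k]
    exact hnz k
  rw [norm_mul, norm_mul, ← mul_assoc] at h1
  exact le_of_mul_le_mul_right h1 hP

section Product

variable {p₁ p₂ : ℕ} {κ₁ : ℕ → Fin p₁ → ℕ} {κ₂ : ℕ → Fin p₂ → ℕ}
  {κ : ℕ → Fin (p₁ + p₂) → ℕ} {φ₁ φ₂ : ℕ → ℕ}

theorem phi_reflect (hκ₁ : IsGLexEnum κ₁) (hκ₂ : IsGLexEnum κ₂) (hκ : IsGLexEnum κ)
    (hφ : ∀ j : ℕ, κ j = Fin.append (κ₁ (φ₁ j)) (κ₂ (φ₂ j)))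
    {m n : ℕ} (h1 : φ₁ m ≤ φ₁ n) (h2 : φ₂ m ≤ φ₂ n) : m ≤ n := by
  refine le_of_glexle hκ ?_
  have g1 : κ₁ (φ₁ m) = κ₁ (φ₁ n) ∨ GLexLT (κ₁ (φ₁ m)) (κ₁ (φ₁ n)) := by
    rcases h1.lt_or_eq with h | h
    · exact Or.inr (hκ₁.2 _ _ h)
    · exact Or.inl (by rw [h])
  have g2 : κ₂ (φ₂ m) = κ₂ (φ₂ n) ∨ GLexLT (κ₂ (φ₂ m)) (κ₂ (φ₂ n)) := by
    rcases h2.lt_or_eq with h | h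
    · exact Or.inr (hκ₂.2 _ _ h)
    · exact Or.inl (by rw [h])
  rw [hφ m, hφ n]
  exact glex_append_mono g1 g2

theorem phi_surj (hκ₁ : IsGLexEnum κ₁) (hκ₂ : IsGLexEnum κ₂) (hκ : IsGLexEnum κ)
    (hφ : ∀ j : ℕ, κ j = Fin.append (κ₁ (φ₁ j)) (κ₂ (φ₂ j)))
    (u v : ℕ) : ∃ m, φ₁ m = u ∧ φ₂ m = v := by
  obtain ⟨m, hm⟩ := hκ.1.2 (Fin.append (κ₁ u) (κ₂ v))
  rw [hφ m] at hm
  obtain ⟨e1, e2⟩ := append_inj hm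
  exact ⟨m, hκ₁.1.1 e1, hκ₂.1.1 e2⟩

theorem phi_inj (hκ₁ : IsGLexEnum κ₁) (hκ₂ : IsGLexEnum κ₂) (hκ : IsGLexEnum κ)
    (hφ : ∀ j : ℕ, κ j = Fin.append (κ₁ (φ₁ j)) (κ₂ (φ₂ j)))
    {m n : ℕ} (h1 : φ₁ m = φ₁ n) (h2 : φ₂ m = φ₂ n) : m = n := by
  apply hκ.1.1
  rw [hφ m, hφ n, h1, h2]

theorem sum_pair (hκ₁ : IsGLexEnum κ₁) (hκ₂ : IsGLexEnum κ₂) (hκ : IsGLexEnum κ)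
    (hφ : ∀ j : ℕ, κ j = Fin.append (κ₁ (φ₁ j)) (κ₂ (φ₂ j)))
    (cc₁ cc₂ : ℕ → ℕ → ℂ)
    (hzero₁ : ∀ u u', u < u' → cc₁ u u' = 0) (hzero₂ : ∀ u u', u < u' → cc₂ u u' = 0)
    {n : ℕ} (N : Fin n) (x : Fin p₁ → ℂ) (y : Fin p₂ → ℂ) :
    (∑ N' : Fin n, mono κ (N' : ℕ) (Fin.append x y) *
        (cc₁ (φ₁ (N : ℕ)) (φ₁ (N' : ℕ)) * cc₂ (φ₂ (N : ℕ)) (φ₂ (N' : ℕ)))) =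
      Fpoly κ₁ cc₁ (φ₁ (N : ℕ)) x * Fpoly κ₂ cc₂ (φ₂ (N : ℕ)) y := by
  classical
  have hmono : ∀ N' : Fin n, mono κ (N' : ℕ) (Fin.append x y) =
      mono κ₁ (φ₁ (N' : ℕ)) x * mono κ₂ (φ₂ (N' : ℕ)) y := by
    intro N'
    rw [mono, mono, mono]
    have : ∀ i, κ (N' : ℕ) i = Fin.append (κ₁ (φ₁ (N' : ℕ))) (κ₂ (φ₂ (N' : ℕ))) i := by
      intro i; rw [hφ]
    rw [Finset.prod_congr rfl (fun i _ => by rw [this i])]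
    exact mono_append _ _ x y
  rw [Fpoly, Fpoly, Finset.sum_mul_sum]
  rw [← Finset.sum_product']
  have hfilter : (∑ N' : Fin n, mono κ (N' : ℕ) (Fin.append x y) *
      (cc₁ (φ₁ (N : ℕ)) (φ₁ (N' : ℕ)) * cc₂ (φ₂ (N : ℕ)) (φ₂ (N' : ℕ)))) =
      ∑ N' ∈ Finset.univ.filter (fun N' : Fin n =>
          φ₁ (N' : ℕ) ≤ φ₁ (N : ℕ) ∧ φ₂ (N' : ℕ) ≤ φ₂ (N : ℕ)),
        mono κ (N' : ℕ) (Fin.append x y) *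
          (cc₁ (φ₁ (N : ℕ)) (φ₁ (N' : ℕ)) * cc₂ (φ₂ (N : ℕ)) (φ₂ (N' : ℕ))) := by
    refine (Finset.sum_filter_of_ne ?_).symm
    intro N' _ hne
    by_contra hc
    push_neg at hc
    rcases Nat.lt_or_ge (φ₁ (N : ℕ)) (φ₁ (N' : ℕ)) with h | h
    · exact hne (by rw [hzero₁ _ _ h]; ring)
    · rcases Nat.lt_or_ge (φ₂ (N : ℕ)) (φ₂ (N' : ℕ)) with h2 | h2
      · exact hne (by rw [hzero₂ _ _ h2]; ring)
      · exact absurd h2 (by simpa using hc h)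
  rw [hfilter]
  refine Finset.sum_bij (fun N' _ => ((φ₁ (N' : ℕ), φ₂ (N' : ℕ)) : ℕ × ℕ)) ?_ ?_ ?_ ?_
  · intro N' hN'
    simp only [Finset.mem_filter] at hN'
    simp only [Finset.mem_product, Finset.mem_range]
    omega
  · intro N' hN' N'' hN'' heq
    simp only [Prod.mk.injEq] at heq
    exact Fin.ext (phi_inj hκ₁ hκ₂ hκ hφ heq.1 heq.2)
  · rintro ⟨u, v⟩ huv
    simp only [Finset.mem_product, Finset.mem_range] at huv
    obtain ⟨m, hm1, hm2⟩ := phi_surj hκ₁ hκ₂ hκ hφ u v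
    have hmN : m ≤ (N : ℕ) :=
      phi_reflect hκ₁ hκ₂ hκ hφ (by omega) (by omega)
    have hmn : m < n := lt_of_le_of_lt hmN N.2
    refine ⟨⟨m, hmn⟩, ?_, ?_⟩
    · simp only [Finset.mem_filter, Finset.mem_univ, true_and]
      constructor <;> omega
    · simp [hm1, hm2]
  · intro N' hN'
    rw [hmono N']
    ring

theorem vdm_prod_update (hκ₁ : IsGLexEnum κ₁) (hκ₂ : IsGLexEnum κ₂) (hκ : IsGLexEnum κ)
    (hφ : ∀ j : ℕ, κ j = Fin.append (κ₁ (φ₁ j)) (κ₂ (φ₂ j)))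
    (a : ℕ → Fin p₁ → ℂ) (b : ℕ → Fin p₂ → ℂ)
    (cc₁ cc₂ : ℕ → ℕ → ℂ)
    (hdiag₁ : ∀ u, cc₁ u u = 1) (hzero₁ : ∀ u u', u < u' → cc₁ u u' = 0)
    (hvan₁ : ∀ u i, i < u → Fpoly κ₁ cc₁ u (a i) = 0)
    (hdiag₂ : ∀ u, cc₂ u u = 1) (hzero₂ : ∀ u u', u < u' → cc₂ u u' = 0)
    (hvan₂ : ∀ u i, i < u → Fpoly κ₂ cc₂ u (b i) = 0)
    (ω : ℕ → Fin (p₁ + p₂) → ℂ)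
    (hω : ∀ j : ℕ, ω j = Fin.append (a (φ₁ j)) (b (φ₂ j)))
    (j : ℕ) (z₁ : Fin p₁ → ℂ) (z₂ : Fin p₂ → ℂ) :
    vdm κ (j + 1) (Function.update ω j (Fin.append z₁ z₂)) =
      (Fpoly κ₁ cc₁ (φ₁ j) z₁ * Fpoly κ₂ cc₂ (φ₂ j) z₂) *
        ∏ M : Fin j, (Fpoly κ₁ cc₁ (φ₁ (M : ℕ)) (a (φ₁ (M : ℕ))) *
          Fpoly κ₂ cc₂ (φ₂ (M : ℕ)) (b (φ₂ (M : ℕ)))) := by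
  classical
  set X : Fin (j + 1) → Fin p₁ → ℂ :=
    fun M => if (M : ℕ) = j then z₁ else a (φ₁ (M : ℕ)) with hX
  set Y : Fin (j + 1) → Fin p₂ → ℂ :=
    fun M => if (M : ℕ) = j then z₂ else b (φ₂ (M : ℕ)) with hY
  have hη : ∀ M : Fin (j + 1),
      Function.update ω j (Fin.append z₁ z₂) (M : ℕ) = Fin.append (X M) (Y M) := by
    intro M
    by_cases hM : (M : ℕ) = j
    · rw [hX, hY, hM, Function.update_self]
      simp [hM]
    · rw [hX, hY]
      simp only [if_neg hM]
      rw [Function.update_of_ne hM, hω]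
  set T : Matrix (Fin (j + 1)) (Fin (j + 1)) ℂ :=
    Matrix.of fun N' N : Fin (j + 1) =>
      cc₁ (φ₁ (N : ℕ)) (φ₁ (N' : ℕ)) * cc₂ (φ₂ (N : ℕ)) (φ₂ (N' : ℕ)) with hT
  have hTtri : T.BlockTriangular id := by
    intro i k hik
    simp only [hT, Matrix.of_apply]
    rcases Nat.lt_or_ge (φ₁ (k : ℕ)) (φ₁ (i : ℕ)) with h | h
    · rw [hzero₁ _ _ h, zero_mul]
    · rcases Nat.lt_or_ge (φ₂ (k : ℕ)) (φ₂ (i : ℕ)) with h2 | h2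
      · rw [hzero₂ _ _ h2, mul_zero]
      · exact absurd (phi_reflect hκ₁ hκ₂ hκ hφ h h2)
          (by simp only [id] at hik; exact not_le.2 hik)
  have hTdet : T.det = 1 := by
    rw [Matrix.det_of_upperTriangular hTtri]
    simp [hT, hdiag₁, hdiag₂]
  set B : Matrix (Fin (j + 1)) (Fin (j + 1)) ℂ :=
    Matrix.of fun M N : Fin (j + 1) =>
      Fpoly κ₁ cc₁ (φ₁ (N : ℕ)) (X M) * Fpoly κ₂ cc₂ (φ₂ (N : ℕ)) (Y M) with hB
  have hprod : (Matrix.of fun M N : Fin (j + 1) =>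
      mono κ (N : ℕ) (Function.update ω j (Fin.append z₁ z₂) (M : ℕ))) * T = B := by
    ext M N
    rw [Matrix.mul_apply]
    simp only [hT, hB, Matrix.of_apply]
    calc (∑ N' : Fin (j+1), mono κ (N' : ℕ)
            (Function.update ω j (Fin.append z₁ z₂) (M : ℕ)) *
            (cc₁ (φ₁ (N : ℕ)) (φ₁ (N' : ℕ)) * cc₂ (φ₂ (N : ℕ)) (φ₂ (N' : ℕ))))
        = (∑ N' : Fin (j+1), mono κ (N' : ℕ) (Fin.append (X M) (Y M)) *
            (cc₁ (φ₁ (N : ℕ)) (φ₁ (N' : ℕ)) * cc₂ (φ₂ (N : ℕ)) (φ₂ (N' : ℕ)))) := by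
          refine Finset.sum_congr rfl fun N' _ => ?_
          rw [hη M]
      _ = _ := sum_pair hκ₁ hκ₂ hκ hφ cc₁ cc₂ hzero₁ hzero₂ N (X M) (Y M)
  have hBtri : B.BlockTriangular OrderDual.toDual := by
    intro M N hMN
    have hMN' : (M : ℕ) < (N : ℕ) := hMN
    simp only [hB, Matrix.of_apply]
    have hMj : (M : ℕ) ≠ j := by
      have := N.2
      omega
    rw [hX, hY]
    simp only [if_neg hMj]
    rcases Nat.lt_or_ge (φ₁ (M : ℕ)) (φ₁ (N : ℕ)) with h | h
    · rw [hvan₁ _ _ h, zero_mul]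
    · rcases Nat.lt_or_ge (φ₂ (M : ℕ)) (φ₂ (N : ℕ)) with h2 | h2
      · rw [hvan₂ _ _ h2, mul_zero]
      · exact absurd (phi_reflect hκ₁ hκ₂ hκ hφ h h2) (by omega)
  have hdet : vdm κ (j + 1) (Function.update ω j (Fin.append z₁ z₂)) = B.det := by
    rw [vdm, ← hprod, Matrix.det_mul, hTdet, mul_one]
  rw [hdet, Matrix.det_of_lowerTriangular _ hBtri]
  have hlast : B (Fin.last j) (Fin.last j) =
      Fpoly κ₁ cc₁ (φ₁ j) z₁ * Fpoly κ₂ cc₂ (φ₂ j) z₂ := by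
    simp [hB, hX, hY]
  rw [Fin.prod_univ_castSucc, hlast, mul_comm]
  congr 1
  refine Finset.prod_congr rfl fun M _ => ?_
  simp only [hB, Matrix.of_apply, hX, hY, Fin.coe_castSucc, if_neg (Nat.ne_of_lt M.2)]

theorem vdm_prod_points (hκ₁ : IsGLexEnum κ₁) (hκ₂ : IsGLexEnum κ₂) (hκ : IsGLexEnum κ)
    (hφ : ∀ j : ℕ, κ j = Fin.append (κ₁ (φ₁ j)) (κ₂ (φ₂ j)))
    (a : ℕ → Fin p₁ → ℂ) (b : ℕ → Fin p₂ → ℂ)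
    (cc₁ cc₂ : ℕ → ℕ → ℂ)
    (hdiag₁ : ∀ u, cc₁ u u = 1) (hzero₁ : ∀ u u', u < u' → cc₁ u u' = 0)
    (hvan₁ : ∀ u i, i < u → Fpoly κ₁ cc₁ u (a i) = 0)
    (hdiag₂ : ∀ u, cc₂ u u = 1) (hzero₂ : ∀ u u', u < u' → cc₂ u u' = 0)
    (hvan₂ : ∀ u i, i < u → Fpoly κ₂ cc₂ u (b i) = 0)
    (ω : ℕ → Fin (p₁ + p₂) → ℂ)
    (hω : ∀ j : ℕ, ω j = Fin.append (a (φ₁ j)) (b (φ₂ j)))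
    (j : ℕ) :
    vdm κ (j + 1) ω =
      (Fpoly κ₁ cc₁ (φ₁ j) (a (φ₁ j)) * Fpoly κ₂ cc₂ (φ₂ j) (b (φ₂ j))) *
        ∏ M : Fin j, (Fpoly κ₁ cc₁ (φ₁ (M : ℕ)) (a (φ₁ (M : ℕ))) *
          Fpoly κ₂ cc₂ (φ₂ (M : ℕ)) (b (φ₂ (M : ℕ)))) := by
  have := vdm_prod_update hκ₁ hκ₂ hκ hφ a b cc₁ cc₂ hdiag₁ hzero₁ hvan₁ hdiag₂ hzero₂
    hvan₂ ω hω j (a (φ₁ j)) (b (φ₂ j))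
  rwa [← hω j, Function.update_eq_self] at this

end Product

/-- The finset of multi-indices of total degree at most `d`. -/
noncomputable def Tset (p d : ℕ) : Finset (Fin p → ℕ) :=
  (Fintype.piFinset fun _ : Fin p => Finset.range (d + 1)).filter fun α => ∑ i, α i ≤ d

theorem mem_Tset {p d : ℕ} {α : Fin p → ℕ} : α ∈ Tset p d ↔ ∑ i, α i ≤ d := by
  constructor
  · intro h
    exact (Finset.mem_filter.1 h).2
  · intro h
    refine Finset.mem_filter.2 ⟨?_, h⟩
    refine Fintype.mem_piFinset.2 fun i => ?_
    refine Finset.mem_range.2 ?_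
    have : α i ≤ ∑ i', α i' :=
      Finset.single_le_sum (fun i' _ => Nat.zero_le (α i')) (Finset.mem_univ i)
    omega

theorem sum_choose_aux (p : ℕ) : ∀ d : ℕ,
    (∑ e ∈ Finset.range (d + 1), (p + e).choose e) = (p + 1 + d).choose d := by
  intro d
  induction d with
  | zero => simp
  | succ d ih =>
    rw [Finset.sum_range_succ, ih]
    have : (p + 1 + d).choose d + (p + (d+1)).choose (d+1) = (p + 1 + (d+1)).choose (d+1) := by
      have h := Nat.choose_succ_succ (p + d + 1) d
      have e1 : p + 1 + d = p + d + 1 := by omega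
      have e2 : p + (d + 1) = p + d + 1 := by omega
      have e3 : p + 1 + (d + 1) = p + d + 1 + 1 := by omega
      rw [e1, e2, e3, h]
    omega

theorem card_Tset : ∀ p d : ℕ, (Tset p d).card = hdim p d := by
  intro p
  induction p with
  | zero =>
    intro d
    have h : Tset 0 d = {fun i : Fin 0 => 0} := by
      ext α
      simp only [Finset.mem_singleton]
      constructor
      · intro _
        funext i
        exact i.elim0
      · intro h
        exact mem_Tset.2 (by simp)
    rw [h, hdim]
    simp
  | succ p ih =>
    intro d
    have hcard : (Tset (p + 1) d).card =
        ((Finset.range (d + 1)).sigma fun t => Tset p (d - t)).card := by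
      refine Finset.card_bij (fun α _ => (⟨α 0, Fin.tail α⟩ : Σ _ : ℕ, Fin p → ℕ)) ?_ ?_ ?_
      · intro α hα
        have hs := mem_Tset.1 hα
        rw [Fin.sum_univ_succ] at hs
        rw [Finset.mem_sigma]
        constructor
        · exact Finset.mem_range.2 (Nat.lt_succ_of_le (le_trans (Nat.le_add_right _ _) hs))
        · refine mem_Tset.2 ?_
          show (∑ i : Fin p, α i.succ) ≤ d - α 0
          omega
      · intro α hα β hβ heq
        have h0 : α 0 = β 0 := congrArg (fun s : Σ _ : ℕ, Fin p → ℕ => s.1) heq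
        have htail' : Fin.tail α = Fin.tail β :=
          congrArg (fun s : Σ _ : ℕ, Fin p → ℕ => s.2) heq
        rw [← Fin.cons_self_tail α, ← Fin.cons_self_tail β, h0, htail']
      · rintro ⟨t, β⟩ hmem
        rw [Finset.mem_sigma] at hmem
        obtain ⟨ht, hβ⟩ := hmem
        rw [Finset.mem_range] at ht
        have hβ' : β ∈ Tset p (d - t) := hβ
        have ht' : t < d + 1 := ht
        refine ⟨Fin.cons t β, mem_Tset.2 ?_, ?_⟩
        · rw [Fin.sum_univ_succ]
          have h1 := mem_Tset.1 hβ'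
          have : (∑ i : Fin p, (Fin.cons t β : Fin (p+1) → ℕ) i.succ) = ∑ i : Fin p, β i := by
            refine Finset.sum_congr rfl fun i _ => ?_
            rw [Fin.cons_succ]
          rw [Fin.cons_zero, this]
          omega
        · simp only [Fin.cons_zero, Fin.tail_cons]
    rw [hcard, Finset.card_sigma]
    have hsum : (∑ t ∈ Finset.range (d + 1), (Tset p (d - t)).card) =
        ∑ t ∈ Finset.range (d + 1), (p + (d - t)).choose (d - t) :=
      Finset.sum_congr rfl fun t _ => ih (d - t)
    rw [hsum]
    have hrefl := Finset.sum_range_reflect (fun e => (p + e).choose e) (d + 1)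
    have : (∑ t ∈ Finset.range (d + 1), (p + (d - t)).choose (d - t)) =
        ∑ e ∈ Finset.range (d + 1), (p + e).choose e := by
      rw [← hrefl]
      refine Finset.sum_congr rfl fun t ht => ?_
      rw [Finset.mem_range] at ht
      have : d + 1 - 1 - t = d - t := by omega
      rw [this]
    rw [this, sum_choose_aux p d]
    rfl

theorem dc_eq_range (J : Finset ℕ) (hdc : ∀ j' j : ℕ, j' ≤ j → j ∈ J → j' ∈ J) :
    J = Finset.range J.card := by
  ext j
  simp only [Finset.mem_range]
  constructor
  · intro hj
    have hsub : Finset.range (j + 1) ⊆ J := fun k hk =>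
      hdc k j (by simp only [Finset.mem_range] at hk; omega) hj
    have := Finset.card_le_card hsub
    simp only [Finset.card_range] at this
    omega
  · intro hj
    by_contra hjJ
    have hsub : J ⊆ Finset.range j := by
      intro k hk
      simp only [Finset.mem_range]
      by_contra hkj
      exact hjJ (hdc j k (by omega) hk)
    have := Finset.card_le_card hsub
    simp only [Finset.card_range] at this
    omega

theorem enum_block {p : ℕ} {κ : ℕ → Fin p → ℕ} (hκ : IsGLexEnum κ) (d j : ℕ) :
    j < hdim p d ↔ (∑ i, κ j i) ≤ d := by
  classical
  set E : ℕ ≃ (Fin p → ℕ) := Equiv.ofBijective κ hκ.1 with hE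
  have hEapp : ∀ j, E j = κ j := fun j => rfl
  set J : Finset ℕ := (Tset p d).image E.symm with hJ
  have hJmem : ∀ j : ℕ, j ∈ J ↔ (∑ i, κ j i) ≤ d := by
    intro j
    rw [hJ, Finset.mem_image]
    constructor
    · rintro ⟨α, hα, rfl⟩
      have : κ (E.symm α) = α := by rw [← hEapp, Equiv.apply_symm_apply]
      rw [this]
      exact mem_Tset.1 hα
    · intro h
      exact ⟨κ j, mem_Tset.2 h, by rw [← hEapp, Equiv.symm_apply_apply]⟩
  have hJcard : J.card = hdim p d := by
    rw [hJ, Finset.card_image_of_injective _ E.symm.injective, card_Tset]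
  have hdc : ∀ j' j : ℕ, j' ≤ j → j ∈ J → j' ∈ J := by
    intro j' j hle hj
    rw [hJmem] at hj ⊢
    exact le_trans (sum_mono_of_le hκ hle) hj
  have := dc_eq_range J hdc
  rw [hJcard] at this
  rw [← hJmem, this, Finset.mem_range]

theorem hdim_pos (p d : ℕ) : 1 ≤ hdim p d :=
  Nat.choose_pos (by omega)

theorem hdim_mono (p : ℕ) {e d : ℕ} (h : e ≤ d) : hdim p e ≤ hdim p d := by
  rw [← card_Tset, ← card_Tset]
  exact Finset.card_le_card fun α hα => mem_Tset.2 (le_trans (mem_Tset.1 hα) h)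

theorem hdim_lt (p : ℕ) (hp : 1 ≤ p) (d : ℕ) (hd : 1 ≤ d) :
    hdim p (d - 1) < hdim p d := by
  obtain ⟨e, rfl⟩ : ∃ e, d = e + 1 := ⟨d - 1, by omega⟩
  simp only [Nat.add_sub_cancel]
  have h2 : hdim p (e + 1) = hdim p e + (p + e).choose (e + 1) := by
    show (p + (e + 1)).choose (e + 1) = (p + e).choose e + (p + e).choose (e + 1)
    rw [show p + (e + 1) = (p + e) + 1 from by omega]
    exact Nat.choose_succ_succ (p + e) e
  have h3 : 0 < (p + e).choose (e + 1) := Nat.choose_pos (by omega)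
  omega

section Analysis

/-- prefix maximum of a sequence -/
noncomputable def maxR (u : ℕ → ℝ) (d : ℕ) : ℝ :=
  (Finset.range (d + 1)).sup' ⟨0, Finset.mem_range.2 d.succ_pos⟩ u

theorem le_maxR (u : ℕ → ℝ) {e d : ℕ} (h : e ≤ d) : u e ≤ maxR u d :=
  Finset.le_sup' u (Finset.mem_range.2 (by omega))

theorem maxR_nonneg (u : ℕ → ℝ) (h0 : 0 ≤ u 0) (d : ℕ) : 0 ≤ maxR u d :=
  le_trans h0 (le_maxR u (Nat.zero_le d))

theorem cesaro_max (u : ℕ → ℝ) (h0 : ∀ e, 0 ≤ u e)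
    (h : Filter.Tendsto (fun e => u e / e) Filter.atTop (nhds 0)) :
    Filter.Tendsto (fun d => maxR u d / d) Filter.atTop (nhds 0) := by
  rw [Metric.tendsto_atTop] at h ⊢
  intro ε hε
  obtain ⟨E, hE⟩ := h (ε / 2) (half_pos hε)
  set C := maxR u E with hC
  have hC0 : 0 ≤ C := maxR_nonneg u (h0 0) E
  refine ⟨max (E + 1) (⌈2 * C / ε⌉₊ + 1), fun d hd => ?_⟩
  have hdE : E + 1 ≤ d := le_trans (le_max_left _ _) hd
  have hdC : (⌈2 * C / ε⌉₊ + 1 : ℕ) ≤ d := le_trans (le_max_right _ _) hd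
  have hdpos : 0 < (d : ℝ) := by
    have : 1 ≤ d := by omega
    exact_mod_cast Nat.lt_of_lt_of_le Nat.zero_lt_one this
  have hup : maxR u d ≤ C + ε / 2 * d := by
    rw [maxR]
    refine Finset.sup'_le _ _ fun e he => ?_
    rw [Finset.mem_range] at he
    by_cases heE : e ≤ E
    · refine le_trans (le_maxR u heE) ?_
      have : 0 ≤ ε / 2 * d := by positivity
      linarith
    · push_neg at heE
      have hee := hE e (by omega)
      rw [Real.dist_eq, sub_zero] at hee
      have hepos : 0 < (e : ℝ) := by exact_mod_cast Nat.lt_of_lt_of_le Nat.zero_lt_one (by omega)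
      have : u e / e < ε / 2 := lt_of_abs_lt hee
      have h1 : u e < ε / 2 * e := by
        rw [div_lt_iff₀ hepos] at this
        linarith
      have h2 : (e : ℝ) ≤ d := by exact_mod_cast Nat.le_of_lt_succ he
      nlinarith [half_pos hε]
  have hCd : C / d < ε / 2 := by
    have h1 : (2 * C / ε) < d := by
      have := Nat.le_ceil (2 * C / ε)
      have h2 : ((⌈2 * C / ε⌉₊ + 1 : ℕ) : ℝ) ≤ d := by exact_mod_cast hdC
      push_cast at h2
      linarith
    rw [div_lt_iff₀ hdpos]
    rw [div_lt_iff₀ hε] at h1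
    nlinarith
  rw [Real.dist_eq, sub_zero]
  have hnn : 0 ≤ maxR u d / d := div_nonneg (maxR_nonneg u (h0 0) d) hdpos.le
  rw [abs_of_nonneg hnn]
  have : maxR u d / d ≤ C / d + ε / 2 := by
    rw [div_add' _ _ _ hdpos.ne', div_le_div_iff_of_pos_right hdpos]
    linarith
  linarith

theorem one_le_Sblk {p : ℕ} (hp : 1 ≤ p) (M : ℕ → ℝ) (hM : ∀ j, 1 ≤ j → 1 ≤ M j)
    {d : ℕ} (hd : 1 ≤ d) :
    1 ≤ sSup (M '' Set.Ico (hdim p (d - 1)) (hdim p d)) := by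
  have hne : hdim p (d - 1) ∈ Set.Ico (hdim p (d - 1)) (hdim p d) :=
    ⟨le_refl _, hdim_lt p hp d hd⟩
  have hbdd : BddAbove (M '' Set.Ico (hdim p (d - 1)) (hdim p d)) :=
    ((Set.finite_Ico _ _).image M).bddAbove
  refine le_trans (hM _ (hdim_pos p (d - 1))) (le_csSup hbdd ?_)
  exact Set.mem_image_of_mem M hne

theorem Sblk_le {p : ℕ} (hp : 1 ≤ p) (M : ℕ → ℝ) {d : ℕ} (hd : 1 ≤ d) {C : ℝ}
    (hC : ∀ j ∈ Set.Ico (hdim p (d - 1)) (hdim p d), M j ≤ C) :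
    sSup (M '' Set.Ico (hdim p (d - 1)) (hdim p d)) ≤ C := by
  refine csSup_le ?_ ?_
  · exact ⟨M (hdim p (d - 1)),
      Set.mem_image_of_mem M ⟨le_refl _, hdim_lt p hp d hd⟩⟩
  · rintro x ⟨j, hj, rfl⟩
    exact hC j hj

theorem le_Sblk {p : ℕ} (M : ℕ → ℝ) {d j : ℕ}
    (hj : j ∈ Set.Ico (hdim p (d - 1)) (hdim p d)) :
    M j ≤ sSup (M '' Set.Ico (hdim p (d - 1)) (hdim p d)) :=
  le_csSup ((Set.finite_Ico _ _).image M).bddAbove (Set.mem_image_of_mem M hj)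

theorem tendsto_log_div (S : ℕ → ℝ) (hS1 : ∀ e, 1 ≤ e → 1 ≤ S e)
    (h : Filter.Tendsto (fun e => S e ^ ((e : ℝ)⁻¹)) Filter.atTop (nhds 1)) :
    Filter.Tendsto (fun e => Real.log (S e) / e) Filter.atTop (nhds 0) := by
  have hlog : Filter.Tendsto (fun e => Real.log (S e ^ ((e : ℝ)⁻¹)))
      Filter.atTop (nhds 0) := by
    have hcont := (Real.continuousAt_log one_ne_zero).tendsto
    have := hcont.comp h
    simpa [Real.log_one, Function.comp_def] using this
  refine hlog.congr' ?_
  filter_upwards [Filter.eventually_ge_atTop 1] with e he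
  have hpos : (0 : ℝ) < S e := lt_of_lt_of_le one_pos (hS1 e he)
  rw [Real.log_rpow hpos]
  ring

end Analysis

theorem factor_bound {p' : ℕ} {κ' : ℕ → Fin p' → ℕ} (hκ' : IsGLexEnum κ')
    (M' : ℕ → ℝ) {d k : ℕ} (hk1 : 1 ≤ k) (hk : k < hdim p' d) :
    ∃ e, 1 ≤ e ∧ e ≤ d ∧ M' k ≤ sSup (M' '' Set.Ico (hdim p' (e - 1)) (hdim p' e)) := by
  classical
  have hex : ∃ e, k < hdim p' e := ⟨d, hk⟩
  set e := Nat.find hex with he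
  have hspec : k < hdim p' e := Nat.find_spec hex
  have hed : e ≤ d := Nat.find_min' hex hk
  have he1 : 1 ≤ e := by
    rcases Nat.eq_zero_or_pos e with h0 | h
    · exfalso
      rw [h0] at hspec
      have := hdim_pos p' 0
      have h1 : hdim p' 0 = 1 := by
        rw [hdim]
        simp
      omega
    · exact h
  have hlo : hdim p' (e - 1) ≤ k := by
    have := Nat.find_min hex (m := e - 1) (by omega)
    omega
  exact ⟨e, he1, hed, le_Sblk M' ⟨hlo, hspec⟩⟩

theorem growth_limit {p₁ p₂ : ℕ} (hp₁ : 1 ≤ p₁) (hp₂ : 1 ≤ p₂)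
    {κ₁ : ℕ → Fin p₁ → ℕ} {κ₂ : ℕ → Fin p₂ → ℕ} {κ : ℕ → Fin (p₁ + p₂) → ℕ}
    {φ₁ φ₂ : ℕ → ℕ}
    (hκ₁ : IsGLexEnum κ₁) (hκ₂ : IsGLexEnum κ₂) (hκ : IsGLexEnum κ)
    (hφ : ∀ j : ℕ, κ j = Fin.append (κ₁ (φ₁ j)) (κ₂ (φ₂ j)))
    (M' M'' : ℕ → ℝ)
    (hM'1 : ∀ j, 1 ≤ j → 1 ≤ M' j) (hM''1 : ∀ j, 1 ≤ j → 1 ≤ M'' j)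
    (hlim' : Filter.Tendsto
      (fun d : ℕ => (sSup (M' '' Set.Ico (hdim p₁ (d - 1)) (hdim p₁ d))) ^ ((d : ℝ)⁻¹))
      Filter.atTop (nhds 1))
    (hlim'' : Filter.Tendsto
      (fun d : ℕ => (sSup (M'' '' Set.Ico (hdim p₂ (d - 1)) (hdim p₂ d))) ^ ((d : ℝ)⁻¹))
      Filter.atTop (nhds 1)) :
    Filter.Tendsto
      (fun d : ℕ => (sSup ((fun j => (if φ₁ j = 0 then 1 else M' (φ₁ j)) *
          (if φ₂ j = 0 then 1 else M'' (φ₂ j))) ''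
        Set.Ico (hdim (p₁ + p₂) (d - 1)) (hdim (p₁ + p₂) d))) ^ ((d : ℝ)⁻¹))
      Filter.atTop (nhds 1) := by
  classical
  have hp : 1 ≤ p₁ + p₂ := by omega
  set Mfun : ℕ → ℝ := fun j => (if φ₁ j = 0 then 1 else M' (φ₁ j)) *
    (if φ₂ j = 0 then 1 else M'' (φ₂ j)) with hMfun
  set S' : ℕ → ℝ := fun e => sSup (M' '' Set.Ico (hdim p₁ (e - 1)) (hdim p₁ e)) with hS'
  set S'' : ℕ → ℝ := fun e => sSup (M'' '' Set.Ico (hdim p₂ (e - 1)) (hdim p₂ e)) with hS''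
  set v' : ℕ → ℝ := fun e => if e = 0 then 0 else Real.log (S' e) with hv'
  set v'' : ℕ → ℝ := fun e => if e = 0 then 0 else Real.log (S'' e) with hv''
  have hS'1 : ∀ e, 1 ≤ e → 1 ≤ S' e := fun e he => one_le_Sblk hp₁ M' hM'1 he
  have hS''1 : ∀ e, 1 ≤ e → 1 ≤ S'' e := fun e he => one_le_Sblk hp₂ M'' hM''1 he
  have hv'0 : ∀ e, 0 ≤ v' e := by
    intro e
    rw [hv']
    by_cases h : e = 0
    · simp [h]
    · simp only [if_neg h]
      exact Real.log_nonneg (hS'1 e (by omega))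
  have hv''0 : ∀ e, 0 ≤ v'' e := by
    intro e
    rw [hv'']
    by_cases h : e = 0
    · simp [h]
    · simp only [if_neg h]
      exact Real.log_nonneg (hS''1 e (by omega))
  have hv'div : Filter.Tendsto (fun e => v' e / e) Filter.atTop (nhds 0) := by
    refine (tendsto_log_div S' hS'1 hlim').congr' ?_
    filter_upwards [Filter.eventually_ge_atTop 1] with e he
    simp [hv', show e ≠ 0 by omega]
  have hv''div : Filter.Tendsto (fun e => v'' e / e) Filter.atTop (nhds 0) := by
    refine (tendsto_log_div S'' hS''1 hlim'').congr' ?_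
    filter_upwards [Filter.eventually_ge_atTop 1] with e he
    simp [hv'', show e ≠ 0 by omega]
  -- the key upper bound on each block element
  have key : ∀ d, 1 ≤ d → ∀ j ∈ Set.Ico (hdim (p₁ + p₂) (d - 1)) (hdim (p₁ + p₂) d),
      Mfun j ≤ Real.exp (maxR v' d + maxR v'' d) := by
    intro d hd j hj
    have hsum : (∑ i, κ j i) ≤ d := (enum_block hκ d j).1 hj.2
    have hsum_split : (∑ i, κ₁ (φ₁ j) i) + (∑ i, κ₂ (φ₂ j) i) = ∑ i, κ j i := by
      rw [hφ j, sum_append]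
    have hf1 : (if φ₁ j = 0 then 1 else M' (φ₁ j)) ≤ Real.exp (maxR v' d) := by
      by_cases h1 : φ₁ j = 0
      · rw [if_pos h1]
        calc (1 : ℝ) = Real.exp 0 := Real.exp_zero.symm
          _ ≤ _ := Real.exp_le_exp.2 (maxR_nonneg v' (hv'0 0) d)
      · rw [if_neg h1]
        have hk1 : 1 ≤ φ₁ j := by omega
        have hkd : φ₁ j < hdim p₁ d := (enum_block hκ₁ d (φ₁ j)).2 (by omega)
        obtain ⟨e, he1, hed, hbound⟩ := factor_bound hκ₁ M' hk1 hkd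
        refine le_trans hbound ?_
        have hSpos : (0 : ℝ) < S' e := lt_of_lt_of_le one_pos (hS'1 e he1)
        calc S' e = Real.exp (Real.log (S' e)) := (Real.exp_log hSpos).symm
          _ = Real.exp (v' e) := by simp [hv', show e ≠ 0 by omega]
          _ ≤ _ := Real.exp_le_exp.2 (le_maxR v' hed)
    have hf2 : (if φ₂ j = 0 then 1 else M'' (φ₂ j)) ≤ Real.exp (maxR v'' d) := by
      by_cases h2 : φ₂ j = 0
      · rw [if_pos h2]
        calc (1 : ℝ) = Real.exp 0 := Real.exp_zero.symm
          _ ≤ _ := Real.exp_le_exp.2 (maxR_nonneg v'' (hv''0 0) d)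
      · rw [if_neg h2]
        have hk1 : 1 ≤ φ₂ j := by omega
        have hkd : φ₂ j < hdim p₂ d := (enum_block hκ₂ d (φ₂ j)).2 (by omega)
        obtain ⟨e, he1, hed, hbound⟩ := factor_bound hκ₂ M'' hk1 hkd
        refine le_trans hbound ?_
        have hSpos : (0 : ℝ) < S'' e := lt_of_lt_of_le one_pos (hS''1 e he1)
        calc S'' e = Real.exp (Real.log (S'' e)) := (Real.exp_log hSpos).symm
          _ = Real.exp (v'' e) := by simp [hv'', show e ≠ 0 by omega]
          _ ≤ _ := Real.exp_le_exp.2 (le_maxR v'' hed)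
    have hf2nn : (0 : ℝ) ≤ (if φ₂ j = 0 then 1 else M'' (φ₂ j)) := by
      by_cases h2 : φ₂ j = 0
      · rw [if_pos h2]; norm_num
      · rw [if_neg h2]
        exact le_trans zero_le_one (hM''1 _ (by omega))
    rw [hMfun, Real.exp_add]
    exact mul_le_mul hf1 hf2 hf2nn (Real.exp_pos _).le
  have hMfun1 : ∀ j, 1 ≤ j → 1 ≤ Mfun j := by
    intro j _
    have h1 : (1 : ℝ) ≤ (if φ₁ j = 0 then 1 else M' (φ₁ j)) := by
      by_cases h : φ₁ j = 0
      · rw [if_pos h]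
      · rw [if_neg h]; exact hM'1 _ (by omega)
    have h2 : (1 : ℝ) ≤ (if φ₂ j = 0 then 1 else M'' (φ₂ j)) := by
      by_cases h : φ₂ j = 0
      · rw [if_pos h]
      · rw [if_neg h]; exact hM''1 _ (by omega)
    show (1 : ℝ) ≤ (if φ₁ j = 0 then 1 else M' (φ₁ j)) * (if φ₂ j = 0 then 1 else M'' (φ₂ j))
    nlinarith
  -- squeeze
  have hup : Filter.Tendsto (fun d : ℕ => Real.exp ((maxR v' d + maxR v'' d) / d))
      Filter.atTop (nhds 1) := by
    have hadd := (cesaro_max v' hv'0 hv'div).add (cesaro_max v'' hv''0 hv''div)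
    have : Filter.Tendsto (fun d : ℕ => (maxR v' d + maxR v'' d) / d)
        Filter.atTop (nhds 0) := by
      simpa [add_div] using hadd
    have hexp := (Real.continuous_exp.tendsto 0).comp this
    simpa [Function.comp_def] using hexp
  refine tendsto_of_tendsto_of_tendsto_of_le_of_le' tendsto_const_nhds hup ?_ ?_
  · filter_upwards [Filter.eventually_ge_atTop 1] with d hd
    have hS1 : 1 ≤ sSup (Mfun '' Set.Ico (hdim (p₁ + p₂) (d - 1)) (hdim (p₁ + p₂) d)) :=
      one_le_Sblk hp Mfun hMfun1 hd
    have hSpos : (0 : ℝ) < sSup (Mfun '' Set.Ico (hdim (p₁ + p₂) (d - 1))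
        (hdim (p₁ + p₂) d)) := lt_of_lt_of_le one_pos hS1
    rw [Real.rpow_def_of_pos hSpos]
    calc (1 : ℝ) = Real.exp 0 := Real.exp_zero.symm
      _ ≤ _ := Real.exp_le_exp.2 (mul_nonneg (Real.log_nonneg hS1) (by positivity))
  · filter_upwards [Filter.eventually_ge_atTop 1] with d hd
    have hS1 : 1 ≤ sSup (Mfun '' Set.Ico (hdim (p₁ + p₂) (d - 1)) (hdim (p₁ + p₂) d)) :=
      one_le_Sblk hp Mfun hMfun1 hd
    have hle : sSup (Mfun '' Set.Ico (hdim (p₁ + p₂) (d - 1)) (hdim (p₁ + p₂) d)) ≤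
        Real.exp (maxR v' d + maxR v'' d) :=
      Sblk_le hp Mfun hd (key d hd)
    calc (sSup (Mfun '' Set.Ico (hdim (p₁ + p₂) (d - 1)) (hdim (p₁ + p₂) d))) ^ ((d : ℝ)⁻¹)
        ≤ (Real.exp (maxR v' d + maxR v'' d)) ^ ((d : ℝ)⁻¹) :=
          Real.rpow_le_rpow (le_trans zero_le_one hS1) hle (by positivity)
      _ = Real.exp ((maxR v' d + maxR v'' d) / d) := by
          rw [Real.rpow_def_of_pos (Real.exp_pos _), Real.log_exp, div_eq_mul_inv]

end Aux

/-- if `A` is a pseudo Leja sequence for `K₁` with Edrei growth `(M'_j)` and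
`B` is a pseudo Leja sequence for `K₂` with Edrei growth `(M''_j)`, then the intertwining
sequence `Ω = A ⊕ B` is a pseudo Leja sequence for `K = K₁ × K₂` with Edrei growth
`M_j = M'_{φ₁(j)}·M''_{φ₂(j)}` (with the convention `M'_0 = M''_0 = 1`). -/
theorem intertwining_of_pseudoLeja {p₁ p₂ : ℕ} (hp₁ : 1 ≤ p₁) (hp₂ : 1 ≤ p₂)
    (κ₁ : ℕ → Fin p₁ → ℕ) (κ₂ : ℕ → Fin p₂ → ℕ) (κ : ℕ → Fin (p₁ + p₂) → ℕ)
    (hκ₁ : IsGLexEnum κ₁) (hκ₂ : IsGLexEnum κ₂) (hκ : IsGLexEnum κ)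
    (φ₁ φ₂ : ℕ → ℕ)
    (hφ : ∀ j : ℕ, κ j = Fin.append (κ₁ (φ₁ j)) (κ₂ (φ₂ j)))
    (K₁ : Set (Fin p₁ → ℂ)) (K₂ : Set (Fin p₂ → ℂ))
    (hK₁c : IsCompact K₁) (hK₂c : IsCompact K₂)
    (hK₁d : Determining K₁) (hK₂d : Determining K₂)
    (a : ℕ → Fin p₁ → ℂ) (b : ℕ → Fin p₂ → ℂ)
    (M' M'' : ℕ → ℝ)
    (hA : IsPseudoLeja κ₁ K₁ a M') (hB : IsPseudoLeja κ₂ K₂ b M'')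
    (ω : ℕ → Fin (p₁ + p₂) → ℂ)
    (hω : ∀ j : ℕ, ω j = Fin.append (a (φ₁ j)) (b (φ₂ j))) :
    IsPseudoLeja κ (Set.image2 Fin.append K₁ K₂) ω
      (fun j => (if φ₁ j = 0 then 1 else M' (φ₁ j)) *
                (if φ₂ j = 0 then 1 else M'' (φ₂ j))) := by
  obtain ⟨hAmem, hA1, hAineq, hAlim⟩ := hA
  obtain ⟨hBmem, hB1, hBineq, hBlim⟩ := hB
  have hanz : ∀ n, vdm κ₁ n a ≠ 0 := vdm_ne_zero hκ₁ hK₁d hAmem hAineq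
  have hbnz : ∀ n, vdm κ₂ n b ≠ 0 := vdm_ne_zero hκ₂ hK₂d hBmem hBineq
  obtain ⟨cc₁, hdiag₁, hzero₁, hvan₁⟩ := exists_cc κ₁ a hanz
  obtain ⟨cc₂, hdiag₂, hzero₂, hvan₂⟩ := exists_cc κ₂ b hbnz
  refine ⟨?_, ?_, ?_, ?_⟩
  · intro j
    rw [hω j]
    exact Set.mem_image2_of_mem (hAmem _) (hBmem _)
  · intro j _
    beta_reduce
    have h1 : (1 : ℝ) ≤ (if φ₁ j = 0 then 1 else M' (φ₁ j)) := by
      by_cases h : φ₁ j = 0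
      · rw [if_pos h]
      · rw [if_neg h]; exact hA1 _ (by omega)
    have h2 : (1 : ℝ) ≤ (if φ₂ j = 0 then 1 else M'' (φ₂ j)) := by
      by_cases h : φ₂ j = 0
      · rw [if_pos h]
      · rw [if_neg h]; exact hB1 _ (by omega)
    nlinarith
  · intro j _ z hz
    beta_reduce
    obtain ⟨z₁, hz₁, z₂, hz₂, rfl⟩ := hz
    rw [vdm_prod_update hκ₁ hκ₂ hκ hφ a b cc₁ cc₂ hdiag₁ hzero₁ hvan₁ hdiag₂ hzero₂
        hvan₂ ω hω j z₁ z₂,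
      vdm_prod_points hκ₁ hκ₂ hκ hφ a b cc₁ cc₂ hdiag₁ hzero₁ hvan₁ hdiag₂ hzero₂
        hvan₂ ω hω j]
    have b1 : ‖Fpoly κ₁ cc₁ (φ₁ j) z₁‖ ≤
        (if φ₁ j = 0 then 1 else M' (φ₁ j)) *
          ‖Fpoly κ₁ cc₁ (φ₁ j) (a (φ₁ j))‖ := by
      by_cases h : φ₁ j = 0
      · rw [if_pos h, h, fpoly_zero hκ₁ cc₁ hdiag₁, fpoly_zero hκ₁ cc₁ hdiag₁]
        simp
      · rw [if_neg h]
        exact fpoly_bound cc₁ hdiag₁ hzero₁ hvan₁ hanz hAineq (φ₁ j) (by omega) hz₁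
    have b2 : ‖Fpoly κ₂ cc₂ (φ₂ j) z₂‖ ≤
        (if φ₂ j = 0 then 1 else M'' (φ₂ j)) *
          ‖Fpoly κ₂ cc₂ (φ₂ j) (b (φ₂ j))‖ := by
      by_cases h : φ₂ j = 0
      · rw [if_pos h, h, fpoly_zero hκ₂ cc₂ hdiag₂, fpoly_zero hκ₂ cc₂ hdiag₂]
        simp
      · rw [if_neg h]
        exact fpoly_bound cc₂ hdiag₂ hzero₂ hvan₂ hbnz hBineq (φ₂ j) (by omega) hz₂
    rw [norm_mul, norm_mul, norm_mul, norm_mul]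
    have hc1 : (0 : ℝ) ≤ (if φ₁ j = 0 then 1 else M' (φ₁ j)) := by
      by_cases h : φ₁ j = 0
      · rw [if_pos h]; norm_num
      · rw [if_neg h]; exact le_trans zero_le_one (hA1 _ (by omega))
    have hmul : ‖Fpoly κ₁ cc₁ (φ₁ j) z₁‖ * ‖Fpoly κ₂ cc₂ (φ₂ j) z₂‖ ≤
        ((if φ₁ j = 0 then 1 else M' (φ₁ j)) * ‖Fpoly κ₁ cc₁ (φ₁ j) (a (φ₁ j))‖) *
        ((if φ₂ j = 0 then 1 else M'' (φ₂ j)) *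
          ‖Fpoly κ₂ cc₂ (φ₂ j) (b (φ₂ j))‖) :=
      mul_le_mul b1 b2 (norm_nonneg _)
        (mul_nonneg hc1 (norm_nonneg _))
    have hfinal := mul_le_mul_of_nonneg_right hmul (norm_nonneg
      (∏ M : Fin j, (Fpoly κ₁ cc₁ (φ₁ (M : ℕ)) (a (φ₁ (M : ℕ))) *
        Fpoly κ₂ cc₂ (φ₂ (M : ℕ)) (b (φ₂ (M : ℕ))))))
    calc ‖Fpoly κ₁ cc₁ (φ₁ j) z₁‖ * ‖Fpoly κ₂ cc₂ (φ₂ j) z₂‖ *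
          ‖∏ M : Fin j, (Fpoly κ₁ cc₁ (φ₁ (M : ℕ)) (a (φ₁ (M : ℕ))) *
            Fpoly κ₂ cc₂ (φ₂ (M : ℕ)) (b (φ₂ (M : ℕ))))‖
        ≤ _ := hfinal
      _ = (if φ₁ j = 0 then 1 else M' (φ₁ j)) * (if φ₂ j = 0 then 1 else M'' (φ₂ j)) *
          (‖Fpoly κ₁ cc₁ (φ₁ j) (a (φ₁ j))‖ *
            ‖Fpoly κ₂ cc₂ (φ₂ j) (b (φ₂ j))‖ *
            ‖∏ M : Fin j, (Fpoly κ₁ cc₁ (φ₁ (M : ℕ)) (a (φ₁ (M : ℕ))) *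
              Fpoly κ₂ cc₂ (φ₂ (M : ℕ)) (b (φ₂ (M : ℕ))))‖) := by ring
  · exact growth_limit hp₁ hp₂ hκ₁ hκ₂ hκ hφ M' M'' hA1 hB1 hAlim hBlim

end PseudoLeja
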